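/- Let p ≥ 2 and let π be an exchangeable probability distribution on the set of partitions of {1,…,p} (invariant under permutations of the indices). Let a ∈ (0,2) and define generalized Binder's loss L(z, ẑ) = Σ_{i<j} [a·1(z_i=z_j)·1(ẑ_i≠ẑ_j) + (2−a)·1(z_i≠z_j)·1(ẑ_i=ẑ_j)]. Then the prior risk R(ẑ) = E_π[L(z, ẑ)] is constant over all partitions ẑ if and only if the prior co-clustering probability P_π(z_i = z_j) equals (2−a)/2 for all i ≠ j. -/

import Mathlib

open Finset

/-- Risk equilibrium characterization for generalized Binder's loss: for an
exchangeable prior on partitions of `{1,…,p}` (represented by cluster label vectors),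
the prior risk is constant over all partitions iff the co-clustering probability
equals `(2−a)/2` for every pair `i ≠ j`. -/
theorem binder_riskEquilibrium_iff_coclustering
    (p : ℕ) (hp : 2 ≤ p)
    (π : (Fin p → Fin p) → ℝ)
    (hπ : ∀ z, 0 ≤ π z) (hπ1 : ∑ z : Fin p → Fin p, π z = 1)
    (hexch : ∀ (σ : Equiv.Perm (Fin p)) (z : Fin p → Fin p), π (z ∘ σ) = π z)
    (a : ℝ) (ha : 0 < a) (ha2 : a < 2)
    (L : (Fin p → Fin p) → (Fin p → Fin p) → ℝ)
    (hL : ∀ z zhat, L z zhat = ∑ i : Fin p, ∑ j : Fin p, if i < j then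
      (a * (if z i = z j then 1 else 0) * (if zhat i ≠ zhat j then 1 else 0)
        + (2 - a) * (if z i ≠ z j then 1 else 0) * (if zhat i = zhat j then 1 else 0))
      else 0)
    (R : (Fin p → Fin p) → ℝ)
    (hR : ∀ zhat, R zhat = ∑ z : Fin p → Fin p, π z * L z zhat) :
    (∀ zhat zhat' : Fin p → Fin p, R zhat = R zhat') ↔
      (∀ i j : Fin p, i ≠ j →
        (∑ z : Fin p → Fin p, (if z i = z j then π z else 0)) = (2 - a) / 2) := by
  set Q : Fin p → Fin p → ℝ :=
    fun i j => ∑ z : Fin p → Fin p, (if z i = z j then π z else 0) with hQdef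
  -- complement sum
  have hQc : ∀ i j : Fin p, (∑ z : Fin p → Fin p, (if z i = z j then 0 else π z))
      = 1 - Q i j := by
    intro i j
    have : ∀ z : Fin p → Fin p,
        (if z i = z j then 0 else π z) = π z - (if z i = z j then π z else 0) := by
      intro z; by_cases h : z i = z j <;> simp [h]
    rw [Finset.sum_congr rfl (fun z _ => this z), Finset.sum_sub_distrib, hπ1]
  -- key formula for R
  have hRkey : ∀ zhat, R zhat = ∑ i : Fin p, ∑ j : Fin p, if i < j then
      (if zhat i = zhat j then (2 - a) * (1 - Q i j) else a * Q i j) else 0 := by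
    intro zhat
    rw [hR]
    have step : ∀ z, π z * L z zhat = ∑ i : Fin p, ∑ j : Fin p, if i < j then
        (if zhat i = zhat j then (2 - a) * (if z i = z j then 0 else π z)
          else a * (if z i = z j then π z else 0)) else 0 := by
      intro z
      rw [hL, Finset.mul_sum]
      refine Finset.sum_congr rfl (fun i _ => ?_)
      rw [Finset.mul_sum]
      refine Finset.sum_congr rfl (fun j _ => ?_)
      by_cases hij : i < j
      · simp only [if_pos hij]
        by_cases hz : z i = z j <;> by_cases hh : zhat i = zhat j <;>
          simp [hz, hh] <;> ring
      · simp [hij]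
    rw [Finset.sum_congr rfl (fun z _ => step z), Finset.sum_comm]
    refine Finset.sum_congr rfl (fun i _ => ?_)
    rw [Finset.sum_comm]
    refine Finset.sum_congr rfl (fun j _ => ?_)
    by_cases hij : i < j
    · simp only [if_pos hij]
      by_cases hh : zhat i = zhat j
      · simp only [if_pos hh, ← Finset.mul_sum, hQc]
      · simp only [if_neg hh, ← Finset.mul_sum]; rfl
    · simp [hij]
  constructor
  · -- forward
    intro hconst
    -- first prove for i < j
    have main : ∀ i j : Fin p, i < j → Q i j = (2 - a) / 2 := by
      intro i j hij
      have hijne : i ≠ j := ne_of_lt hij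
      set w : Fin p → Fin p := fun k => if k = j then i else k with hwdef
      have hw : ∀ k l : Fin p, k < l → (w k = w l ↔ (k = i ∧ l = j)) := by
        intro k l hkl
        constructor
        · intro h
          by_cases hlj : l = j
          · subst hlj
            rw [hwdef] at h
            simp only [if_pos rfl, if_neg (ne_of_lt hkl)] at h
            exact ⟨h, rfl⟩
          · by_cases hkj : k = j
            · subst hkj
              rw [hwdef] at h
              simp only [if_pos rfl, if_neg hlj] at h
              exact absurd h (ne_of_lt (lt_trans hij hkl))
            · rw [hwdef] at h
              simp only [if_neg hkj, if_neg hlj] at h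
              exact absurd h (ne_of_lt hkl)
        · rintro ⟨rfl, rfl⟩
          rw [hwdef]
          simp [hijne]
      have hid : R id = ∑ k : Fin p, ∑ l : Fin p,
          if k < l then a * Q k l else 0 := by
        rw [hRkey]
        refine Finset.sum_congr rfl (fun k _ => Finset.sum_congr rfl (fun l _ => ?_))
        by_cases hkl : k < l
        · simp [hkl, ne_of_lt hkl]
        · simp [hkl]
      have hwR : R w = ∑ k : Fin p, ∑ l : Fin p,
          if k < l then (if k = i ∧ l = j then (2 - a) * (1 - Q k l)
            else a * Q k l) else 0 := by
        rw [hRkey]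
        refine Finset.sum_congr rfl (fun k _ => Finset.sum_congr rfl (fun l _ => ?_))
        by_cases hkl : k < l
        · simp only [if_pos hkl, hw k l hkl]
        · simp [hkl]
      have heq : R w = R id := hconst w id
      rw [hwR, hid] at heq
      have hdiff : (∑ k : Fin p, ∑ l : Fin p,
          ((if k < l then (if k = i ∧ l = j then (2 - a) * (1 - Q k l)
            else a * Q k l) else 0) - (if k < l then a * Q k l else 0))) = 0 := by
        rw [Finset.sum_congr rfl (fun k _ => Finset.sum_sub_distrib _ _),
          Finset.sum_sub_distrib, heq, sub_self]
      have hsingle : (∑ k : Fin p, ∑ l : Fin p,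
          ((if k < l then (if k = i ∧ l = j then (2 - a) * (1 - Q k l)
            else a * Q k l) else 0) - (if k < l then a * Q k l else 0)))
          = (2 - a) * (1 - Q i j) - a * Q i j := by
        rw [Finset.sum_eq_single i]
        · rw [Finset.sum_eq_single j]
          · simp [hij]
          · intro l _ hlj
            by_cases hkl : i < l
            · simp [hkl, hlj]
            · simp [hkl]
          · intro h; exact absurd (Finset.mem_univ j) h
        · intro k _ hki
          refine Finset.sum_eq_zero (fun l _ => ?_)
          by_cases hkl : k < l
          · simp [hkl, hki]
          · simp [hkl]
        · intro h; exact absurd (Finset.mem_univ i) h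
      rw [hsingle] at hdiff
      nlinarith [hdiff]
    intro i j hij
    rcases lt_or_gt_of_ne hij with h | h
    · exact main i j h
    · show Q i j = (2 - a) / 2
      rw [show Q i j = Q j i from
        Finset.sum_congr rfl (fun z _ => if_congr ⟨Eq.symm, Eq.symm⟩ rfl rfl),
        main j i h]
  · -- backward
    intro hQ' zhat zhat'
    have hQ'' : ∀ k l : Fin p, k ≠ l → Q k l = (2 - a) / 2 := hQ'
    have hval : ∀ zh : Fin p → Fin p, R zh = ∑ k : Fin p, ∑ l : Fin p,
        if k < l then a * (2 - a) / 2 else 0 := by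
      intro zh
      rw [hRkey]
      refine Finset.sum_congr rfl (fun k _ => Finset.sum_congr rfl (fun l _ => ?_))
      by_cases hkl : k < l
      · simp only [if_pos hkl]
        rw [hQ'' k l (ne_of_lt hkl)]
        by_cases hh : zh k = zh l
        · rw [if_pos hh]; ring
        · rw [if_neg hh]; ring
      · simp [hkl]
    rw [hval zhat, hval zhat']
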